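/- Fix an integer t ≥ 1. There exist a constant c ∈ ℕ and a decoder relation D : ℕ → ℕ → Prop such that for every n ≥ 2 and every n-vertex finite bipartite graph G with a given bipartition (U, W) containing no one-sided induced copy of F¹_{t,1} with its star centers in U (i.e., no induced subgraph isomorphic to the disjoint union of a star K_{1,t} and a single edge K₂ in which the vertex of degree t lies in U), there is an injective labeling ℓ : V(G) → Fin (n ^ c) such that for all distinct vertices u, v of G, u and v are adjacent in G if and only if D (ℓ u) (ℓ v) holds. -/

import Mathlib

open SimpleGraph

/-- `F¹_{t,p}`: the disjoint union of two stars `K_{1,t}` and `K_{1,p}` with both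
centers (`inl 0` and `inl 1`) in the same part of the bipartition. In particular
`F¹_{t,1}` is the disjoint union of `K_{1,t}` (center `inl 0`) and a single edge `K₂`
(its endpoint `inl 1` lying in the same part as the star center). -/
def F1tp (t p : ℕ) : SimpleGraph (Fin 2 ⊕ Fin (t + p)) :=
  SimpleGraph.fromRel fun u v =>
    match u, v with
    | Sum.inl a, Sum.inr b => (a = 0 ∧ (b : ℕ) < t) ∨ (a = 1 ∧ t ≤ (b : ℕ))
    | _, _ => False

namespace St9

/-! ### Numeric encoding of lists -/

def codeOf (l : List ℕ) : ℕ := l.foldr Nat.pair 0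

def entry (i code : ℕ) : ℕ := (Nat.unpair ((fun x => (Nat.unpair x).2)^[i] code)).1

lemma entry_codeOf (l : List ℕ) (i : ℕ) (h : i < l.length) :
    entry i (codeOf l) = l.get ⟨i, h⟩ := by
  induction l generalizing i with
  | nil => simp at h
  | cons a tl ih =>
    cases i with
    | zero => simp [entry, codeOf]
    | succ i =>
      have h1 : entry (i+1) (codeOf (a :: tl)) = entry i (codeOf tl) := by
        simp [entry, codeOf, Function.iterate_succ_apply]
      rw [h1, ih i (by simpa using h)]
      simp

lemma pair_lt {a b M : ℕ} (ha : a < M) (hb : b < M) : Nat.pair a b < M ^ 2 := by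
  unfold Nat.pair; split <;> nlinarith

lemma codeOf_lt {M : ℕ} (hM : 1 ≤ M) :
    ∀ l : List ℕ, (∀ x ∈ l, x < M) → codeOf l < M ^ (2 ^ l.length)
  | [], _ => by
      simp only [codeOf, List.foldr_nil, List.length_nil, pow_zero, pow_one]
      omega
  | a :: tl, h => by
      have h1 := codeOf_lt hM tl (fun x hx => h x (List.mem_cons_of_mem _ hx))
      have hMle : M ≤ M ^ (2 ^ tl.length) := by
        calc M = M ^ 1 := (pow_one M).symm
        _ ≤ M ^ (2 ^ tl.length) := Nat.pow_le_pow_right hM (Nat.one_le_two_pow)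
      have ha : a < M ^ (2 ^ tl.length) := lt_of_lt_of_le (h a List.mem_cons_self) hMle
      have := pair_lt ha h1
      have heq : (M ^ (2 ^ tl.length)) ^ 2 = M ^ (2 ^ (tl.length + 1)) := by
        rw [← pow_mul, pow_succ]
      simpa [codeOf, heq] using this

/-! ### Decoders -/

def tagOf (x : ℕ) : ℕ := (Nat.unpair x).1
def idOf (x : ℕ) : ℕ := (Nat.unpair (Nat.unpair x).2).1
def f1Of (x : ℕ) : ℕ := (Nat.unpair (Nat.unpair (Nat.unpair x).2).2).1
def f2Of (x : ℕ) : ℕ := (Nat.unpair (Nat.unpair (Nat.unpair x).2).2).2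

/-- the one-directional decoder: `a` is interpreted as a `U`-label, `b` as a `W`-label. -/
def Psi (t : ℕ) (a b : ℕ) : Prop :=
  tagOf a = 0 ∧ tagOf b = 1 ∧
    ¬ ((if f1Of b + t < f1Of a then True
        else if f1Of a < f1Of b then False
        else entry (f1Of a - f1Of b) (f2Of b) = 1)
       ↔ (∃ i < 2 * t, entry i (f2Of a) = idOf b + 1))

section Graph

open scoped Classical

variable {n : ℕ} (G : SimpleGraph (Fin n)) (side : Fin n → Bool)

noncomputable def NB (v : Fin n) : Finset (Fin n) := Finset.univ.filter fun w => G.Adj v w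

lemma mem_NB {v w : Fin n} : w ∈ NB G v ↔ G.Adj v w := by simp [NB]

noncomputable def degr (v : Fin n) : ℕ := (NB G v).card

noncomputable def Sd (d : ℕ) : Finset (Fin n) :=
  Finset.univ.filter fun u => side u = true ∧ degr G u = d

noncomputable def rep (v0 : Fin n) (d : ℕ) : Fin n :=
  if h : (Sd G side d).Nonempty then h.choose else v0

lemma rep_spec (v0 : Fin n) (d : ℕ) (h : (Sd G side d).Nonempty) :
    side (rep G side v0 d) = true ∧ degr G (rep G side v0 d) = d := by
  rw [rep, dif_pos h]
  have := h.choose_spec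
  simpa [Sd] using this

noncomputable def Aset (v0 u : Fin n) : Finset (Fin n) :=
  symmDiff (NB G u) (NB G (rep G side v0 (degr G u)))

noncomputable def dwf (w : Fin n) : ℕ :=
  if h : (NB G w).Nonempty then ((NB G w).image (degr G)).min' (h.image _) else n

noncomputable def uList (t : ℕ) (v0 u : Fin n) : List ℕ :=
  (((Aset G side v0 u).sort (· ≤ ·)).map (fun x => x.val + 1))
    ++ List.replicate (2 * t - (Aset G side v0 u).card) 0

noncomputable def wList (t : ℕ) (v0 w : Fin n) : List ℕ :=
  (List.range (t + 1)).map
    (fun j => if G.Adj (rep G side v0 (dwf G w + j)) w then 1 else 0)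

noncomputable def lab (t : ℕ) (v0 v : Fin n) : ℕ :=
  if side v then
    Nat.pair 0 (Nat.pair v.val (Nat.pair (degr G v) (codeOf (uList G side t v0 v))))
  else
    Nat.pair 1 (Nat.pair v.val (Nat.pair (dwf G v) (codeOf (wList G side t v0 v))))

/-- The key combinatorial consequence of F-freeness. -/
lemma key {t : ℕ}
    (hbip : ∀ u v, G.Adj u v → side u ≠ side v)
    (hF : ¬ ∃ f : F1tp t 1 ↪g G,
      side (f (Sum.inl 0)) = true ∧ side (f (Sum.inl 1)) = true)
    {u u' : Fin n} (hu : side u = true) (hu' : side u' = true)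
    (hne : (NB G u' \ NB G u).Nonempty) : (NB G u \ NB G u').card < t := by
  by_contra hc
  push_neg at hc
  obtain ⟨T, hTsub, hTcard⟩ := Finset.exists_subset_card_eq hc
  obtain ⟨w', hw'mem⟩ := hne
  rw [Finset.mem_sdiff, mem_NB, mem_NB] at hw'mem
  obtain ⟨hw'u', hw'u⟩ := hw'mem
  have hT : ∀ x ∈ T, G.Adj u x ∧ ¬ G.Adj u' x := by
    intro x hx
    have := hTsub hx
    rw [Finset.mem_sdiff, mem_NB, mem_NB] at this
    exact this
  have hsideW : ∀ x : Fin n, G.Adj u x → side x = false := by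
    intro x hx
    have := hbip u x hx
    rw [hu] at this
    simpa using this.symm
  have hsideW' : ∀ x : Fin n, G.Adj u' x → side x = false := by
    intro x hx
    have := hbip u' x hx
    rw [hu'] at this
    simpa using this.symm
  have huu' : u ≠ u' := fun h => hw'u (h ▸ hw'u')
  set g := T.equivFinOfCardEq hTcard with hg
  let f0 : Fin 2 ⊕ Fin (t + 1) → Fin n := fun x =>
    match x with
    | Sum.inl a => if a = 0 then u else u'
    | Sum.inr b => if hb : (b : ℕ) < t then (g.symm ⟨(b : ℕ), hb⟩ : Fin n) else w'
  have hleaf : ∀ (j : ℕ) (hj : j < t), G.Adj u (g.symm ⟨j, hj⟩ : Fin n) ∧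
      ¬ G.Adj u' (g.symm ⟨j, hj⟩ : Fin n) := fun j hj => hT _ (g.symm ⟨j, hj⟩).2
  -- f0 maps inl to side-true vertices, inr to side-false vertices
  have hfL : ∀ a : Fin 2, side (f0 (Sum.inl a)) = true := by
    intro a
    by_cases h : a = 0 <;> simp [f0, h, hu, hu']
  have hfR : ∀ b : Fin (t+1), side (f0 (Sum.inr b)) = false := by
    intro b
    by_cases hb : (b : ℕ) < t
    · simp only [f0, dif_pos hb]
      exact hsideW _ (hleaf _ hb).1
    · simp only [f0, dif_neg hb]
      exact hsideW' _ hw'u'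
  have hnoW : ∀ x y : Fin n, side x = false → side y = false → ¬ G.Adj x y := by
    intro x y hx hy hadj
    exact hbip x y hadj (hx.trans hy.symm)
  have hnoU : ∀ x y : Fin n, side x = true → side y = true → ¬ G.Adj x y := by
    intro x y hx hy hadj
    exact hbip x y hadj (hx.trans hy.symm)
  have hinj : Function.Injective f0 := by
    intro x y hxy
    match x, y with
    | Sum.inl a, Sum.inl a' =>
      simp only [f0] at hxy
      by_cases h : a = 0 <;> by_cases h' : a' = 0
      · rw [h, h']
      · rw [if_pos h, if_neg h'] at hxy; exact absurd hxy huu'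
      · rw [if_neg h, if_pos h'] at hxy; exact absurd hxy.symm huu'
      · congr 1; omega
    | Sum.inl a, Sum.inr b =>
      have := (hfL a).symm.trans (congrArg side hxy) |>.trans (hfR b)
      simp at this
    | Sum.inr b, Sum.inl a =>
      have := (hfR b).symm.trans (congrArg side hxy) |>.trans (hfL a)
      simp at this
    | Sum.inr b, Sum.inr b' =>
      simp only [f0] at hxy
      by_cases hb : (b : ℕ) < t <;> by_cases hb' : (b' : ℕ) < t
      · rw [dif_pos hb, dif_pos hb'] at hxy
        have := g.symm.injective (Subtype.coe_injective hxy)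
        have : ((⟨(b:ℕ), hb⟩ : Fin t) : ℕ) = ((⟨(b':ℕ), hb'⟩ : Fin t) : ℕ) := by rw [this]
        simp at this
        exact congrArg Sum.inr (Fin.ext this)
      · rw [dif_pos hb, dif_neg hb'] at hxy
        exact absurd (hxy ▸ (hleaf _ hb).1) hw'u
      · rw [dif_neg hb, dif_pos hb'] at hxy
        exact absurd (hxy ▸ (hleaf _ hb').1) hw'u
      · congr 1; omega
  have hadjLR : ∀ (a : Fin 2) (b : Fin (t+1)),
      G.Adj (f0 (Sum.inl a)) (f0 (Sum.inr b)) ↔ ((a = 0 ∧ (b:ℕ) < t) ∨ (a = 1 ∧ t ≤ (b:ℕ))) := by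
    intro a b
    by_cases h : a = 0 <;> by_cases hb : (b : ℕ) < t
    · simp only [f0, if_pos h, dif_pos hb, h]
      have := (hleaf _ hb).1
      simp [this, hb]
    · simp only [f0, if_pos h, dif_neg hb, h]
      simp [hw'u, hb]
    · have ha1 : a = 1 := by omega
      simp only [f0, if_neg h, dif_pos hb, ha1]
      have := (hleaf _ hb).2
      simp [this, hb]
    · have ha1 : a = 1 := by omega
      simp only [f0, if_neg h, dif_neg hb, ha1]
      simp [hw'u', hb]; omega
  have hmap : ∀ x y, G.Adj (f0 x) (f0 y) ↔ (F1tp t 1).Adj x y := by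
    intro x y
    match x, y with
    | Sum.inl a, Sum.inl a' =>
      constructor
      · intro h; exact absurd h (hnoU _ _ (hfL a) (hfL a'))
      · intro h; exact absurd h (by simp [F1tp, SimpleGraph.fromRel_adj])
    | Sum.inr b, Sum.inr b' =>
      constructor
      · intro h; exact absurd h (hnoW _ _ (hfR b) (hfR b'))
      · intro h; exact absurd h (by simp [F1tp, SimpleGraph.fromRel_adj])
    | Sum.inl a, Sum.inr b =>
      rw [hadjLR a b]
      simp [F1tp, SimpleGraph.fromRel_adj]
    | Sum.inr b, Sum.inl a =>
      rw [SimpleGraph.adj_comm, hadjLR a b, SimpleGraph.adj_comm]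
      simp [F1tp, SimpleGraph.fromRel_adj]
  refine hF ⟨⟨⟨f0, hinj⟩, hmap _ _⟩, ?_, ?_⟩
  · simpa using hfL 0
  · simpa using hfL 1
end Graph
end St9

open St9

set_option maxHeartbeats 1000000

/-- Bipartite graphs (with a given bipartition `(U, W)`, encoded by `side` with
`U = side ⁻¹' {true}`) containing no one-sided induced copy of `F¹_{t,1}` with its star
centers in `U` admit an implicit representation. -/
theorem statement9 (t : ℕ) (ht : 1 ≤ t) :
    ∃ (c : ℕ) (D : ℕ → ℕ → Prop),
      ∀ n : ℕ, 2 ≤ n → ∀ (G : SimpleGraph (Fin n)) (side : Fin n → Bool),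
        (∀ u v : Fin n, G.Adj u v → side u ≠ side v) →
        (¬ ∃ f : F1tp t 1 ↪g G,
          side (f (Sum.inl 0)) = true ∧ side (f (Sum.inl 1)) = true) →
        ∃ ℓ : Fin n → Fin (n ^ c), Function.Injective ℓ ∧
          ∀ u v : Fin n, u ≠ v → (G.Adj u v ↔ D (ℓ u).val (ℓ v).val) := by
  classical
  refine ⟨2 ^ (2 * t + 4), fun a b => Psi t a b ∨ Psi t b a, ?_⟩
  intro n hn G side hbip hF
  have hn0 : 0 < n := by omega
  set v0 : Fin n := ⟨0, hn0⟩ with hv0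
  -- degree bounds
  have hdegle : ∀ v : Fin n, degr G v ≤ n := by
    intro v
    have := Finset.card_le_univ (NB G v)
    simpa [degr] using this
  have hdwle : ∀ w : Fin n, dwf G w ≤ n := by
    intro w
    rw [dwf]
    split
    · rename_i h
      obtain ⟨x, hx, hxe⟩ := Finset.mem_image.mp (((NB G w).image (degr G)).min'_mem (h.image _))
      rw [← hxe]; exact hdegle x
    · exact le_refl n
  -- monotonicity from key lemma
  have hmono : ∀ u u' : Fin n, side u = true → side u' = true →
      degr G u' + t < degr G u → NB G u' ⊆ NB G u := by
    intro u u' hu hu' hd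
    by_contra hsub
    have hne := Finset.sdiff_nonempty.mpr hsub
    have hk := key G side hbip hF hu hu' hne
    have := Finset.card_inter_add_card_sdiff (NB G u) (NB G u')
    have hint : (NB G u ∩ NB G u').card ≤ degr G u' :=
      Finset.card_le_card (Finset.inter_subset_right)
    have : degr G u ≤ degr G u' + t := by
      unfold degr at *; omega
    omega
  -- same degree: small symmetric difference
  have hsame : ∀ u u' : Fin n, side u = true → side u' = true → degr G u = degr G u' →
      (symmDiff (NB G u) (NB G u')).card ≤ 2 * t := by
    intro u u' hu hu' hdeg
    have hsdef : symmDiff (NB G u) (NB G u') = (NB G u \ NB G u') ∪ (NB G u' \ NB G u) := by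
      rw [symmDiff_def]; rfl
    by_cases h1 : NB G u' ⊆ NB G u
    · have heq : NB G u' = NB G u :=
        Finset.eq_of_subset_of_card_le h1 (le_of_eq hdeg)
      rw [heq, symmDiff_self]
      simp
    · have hk1 := key G side hbip hF hu hu' (Finset.sdiff_nonempty.mpr h1)
      by_cases h2 : NB G u ⊆ NB G u'
      · have heq : NB G u = NB G u' :=
          Finset.eq_of_subset_of_card_le h2 (le_of_eq hdeg.symm)
        exact absurd (heq ▸ Finset.Subset.refl _) h1
      · have hk2 := key G side hbip hF hu' hu (Finset.sdiff_nonempty.mpr h2)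
        calc (symmDiff (NB G u) (NB G u')).card
            ≤ (NB G u \ NB G u').card + (NB G u' \ NB G u).card := by
              rw [hsdef]; exact Finset.card_union_le _ _
          _ ≤ 2 * t := by omega
  -- Sd nonempty for a U-vertex
  have hSd : ∀ u : Fin n, side u = true → (Sd G side (degr G u)).Nonempty := by
    intro u hu
    exact ⟨u, by simp [Sd, hu]⟩
  -- Aset card bound
  have hAcard : ∀ u : Fin n, side u = true → (Aset G side v0 u).card ≤ 2 * t := by
    intro u hu
    obtain ⟨hrs, hrd⟩ := rep_spec G side v0 (degr G u) (hSd u hu)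
    exact hsame u _ hu hrs hrd.symm
  -- uList length
  have hulen : ∀ u : Fin n, side u = true → (uList G side t v0 u).length = 2 * t := by
    intro u hu
    have := hAcard u hu
    simp [uList]
    omega
  have hwlen : ∀ w : Fin n, (wList G side t v0 w).length = t + 1 := by
    intro w; simp [wList]
  -- decoding the labels
  have hdecU : ∀ u : Fin n, side u = true →
      tagOf (lab G side t v0 u) = 0 ∧ idOf (lab G side t v0 u) = u.val ∧
      f1Of (lab G side t v0 u) = degr G u ∧
      f2Of (lab G side t v0 u) = codeOf (uList G side t v0 u) := by
    intro u hu
    simp [lab, hu, tagOf, idOf, f1Of, f2Of]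
  have hdecW : ∀ w : Fin n, side w = false →
      tagOf (lab G side t v0 w) = 1 ∧ idOf (lab G side t v0 w) = w.val ∧
      f1Of (lab G side t v0 w) = dwf G w ∧
      f2Of (lab G side t v0 w) = codeOf (wList G side t v0 w) := by
    intro w hw
    simp [lab, hw, tagOf, idOf, f1Of, f2Of]
  -- size bound
  have hsize : ∀ v : Fin n, lab G side t v0 v < n ^ 2 ^ (2 * t + 4) := by
    have hM0 : (1:ℕ) ≤ n + 2 := by omega
    set M : ℕ := (n + 2) ^ 2 ^ (2 * t) with hMdef
    have hM1 : 1 ≤ M := Nat.one_le_pow _ _ (by omega)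
    have hMle : n + 2 ≤ M := by
      calc n + 2 = (n + 2) ^ 1 := (pow_one _).symm
        _ ≤ M := Nat.pow_le_pow_right (by omega) Nat.one_le_two_pow
    have hMsq : M ≤ M ^ 2 := by nlinarith
    have hMsq2 : M ≤ (M ^ 2) ^ 2 := le_trans hMsq (by nlinarith)
    have hfinal : ∀ x : ℕ, x < ((M ^ 2) ^ 2) ^ 2 → x < n ^ 2 ^ (2 * t + 4) := by
      intro x hx
      have e1 : ((M ^ 2) ^ 2) ^ 2 = (n + 2) ^ 2 ^ (2 * t + 3) := by
        rw [hMdef, ← pow_mul, ← pow_mul, ← pow_mul]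
        congr 1
        rw [pow_succ, pow_succ, pow_succ]
        ring
      have e2 : (n + 2) ^ 2 ^ (2 * t + 3) ≤ (n ^ 2) ^ 2 ^ (2 * t + 3) :=
        Nat.pow_le_pow_left (by nlinarith) _
      have e3 : (n ^ 2) ^ 2 ^ (2 * t + 3) = n ^ 2 ^ (2 * t + 4) := by
        rw [← pow_mul]
        congr 1
        rw [pow_succ (2 : ℕ) (2 * t + 3)]
        ring
      omega
    intro v
    cases hsv : side v
    · -- W side
      have hcodeW : codeOf (wList G side t v0 v) < M := by
        have hlt := codeOf_lt (M := n + 2) hM0 (wList G side t v0 v) ?_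
        · rw [hwlen v] at hlt
          refine lt_of_lt_of_le hlt (Nat.pow_le_pow_right (by omega) ?_)
          exact Nat.pow_le_pow_right (by omega) (by omega)
        · intro x hx
          rw [wList] at hx
          obtain ⟨j, -, hj⟩ := List.mem_map.mp hx
          split at hj <;> omega
      simp only [lab, hsv, if_false, Bool.false_eq_true]
      apply hfinal
      have hp1 : Nat.pair (dwf G v) (codeOf (wList G side t v0 v)) < M ^ 2 :=
        pair_lt (lt_of_le_of_lt (le_trans (hdwle v) (by omega : n ≤ n + 1)) (lt_of_lt_of_le (by omega : n + 1 < n + 2) hMle)) hcodeW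
      have hp2 : Nat.pair v.val (Nat.pair (dwf G v) (codeOf (wList G side t v0 v))) < (M ^ 2) ^ 2 :=
        pair_lt (lt_of_lt_of_le (lt_of_lt_of_le v.isLt (by omega : n ≤ n + 2)) (le_trans hMle hMsq)) hp1
      exact pair_lt (lt_of_lt_of_le (by omega : (1:ℕ) < n + 2) (le_trans hMle hMsq2)) hp2
    · -- U side
      have hcodeU : codeOf (uList G side t v0 v) < M := by
        have hlt := codeOf_lt (M := n + 2) hM0 (uList G side t v0 v) ?_
        · rw [hulen v hsv] at hlt
          exact hlt
        · intro x hx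
          rw [uList, List.mem_append] at hx
          rcases hx with h | h
          · obtain ⟨y, -, hy⟩ := List.mem_map.mp h
            have := y.isLt
            omega
          · have := List.eq_of_mem_replicate h
            omega
      simp only [lab, hsv, if_true]
      apply hfinal
      have hp1 : Nat.pair (degr G v) (codeOf (uList G side t v0 v)) < M ^ 2 :=
        pair_lt (lt_of_le_of_lt (hdegle v) (lt_of_lt_of_le (by omega : n < n + 2) hMle)) hcodeU
      have hp2 : Nat.pair v.val (Nat.pair (degr G v) (codeOf (uList G side t v0 v))) < (M ^ 2) ^ 2 :=
        pair_lt (lt_of_lt_of_le (lt_of_lt_of_le v.isLt (by omega : n ≤ n + 2)) (le_trans hMle hMsq)) hp1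
      exact pair_lt (lt_of_lt_of_le (by omega : (0:ℕ) < n + 2) (le_trans hMle hMsq2)) hp2
  -- membership decoding
  have hmem : ∀ u w : Fin n, side u = true →
      ((∃ i < 2 * t, entry i (codeOf (uList G side t v0 u)) = w.val + 1)
        ↔ w ∈ Aset G side v0 u) := by
    intro u w hu
    constructor
    · rintro ⟨i, hi, hie⟩
      have hil : i < (uList G side t v0 u).length := by rw [hulen u hu]; exact hi
      rw [entry_codeOf _ i hil] at hie
      have hmem2 : (w.val + 1) ∈ uList G side t v0 u := hie ▸ List.get_mem _ _
      rw [uList, List.mem_append] at hmem2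
      rcases hmem2 with h | h
      · obtain ⟨x, hx, hxe⟩ := List.mem_map.mp h
        have : x = w := Fin.ext (by omega)
        rw [← Finset.mem_sort (α := Fin n) (· ≤ ·), ← this]
        exact hx
      · exact absurd (List.eq_of_mem_replicate h) (by omega)
    · intro hw
      have hs : w ∈ (Aset G side v0 u).sort (· ≤ ·) := (Finset.mem_sort _).mpr hw
      have h2 : (w.val + 1) ∈ uList G side t v0 u := by
        rw [uList, List.mem_append]
        exact Or.inl (List.mem_map.mpr ⟨w, hs, rfl⟩)
      obtain ⟨i, hie⟩ := List.mem_iff_get.mp h2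
      refine ⟨i.val, by rw [← hulen u hu]; exact i.isLt, ?_⟩
      rw [entry_codeOf _ i.val i.isLt]
      simpa using hie
  -- base decoding
  have hbase : ∀ u w : Fin n, side u = true → side w = false →
      ((if dwf G w + t < degr G u then True
        else if degr G u < dwf G w then False
        else entry (degr G u - dwf G w) (codeOf (wList G side t v0 w)) = 1)
       ↔ G.Adj (rep G side v0 (degr G u)) w) := by
    intro u w hu hw
    obtain ⟨hrs, hrd⟩ := rep_spec G side v0 (degr G u) (hSd u hu)
    set r := rep G side v0 (degr G u) with hr
    by_cases h1 : dwf G w + t < degr G u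
    · rw [if_pos h1]
      have hNBw : (NB G w).Nonempty := by
        by_contra hh
        rw [dwf, dif_neg hh] at h1
        have := hdegle u
        omega
      have hmin : dwf G w ∈ (NB G w).image (degr G) := by
        rw [dwf, dif_pos hNBw]
        exact Finset.min'_mem _ _
      obtain ⟨u', hu'mem, hu'deg⟩ := Finset.mem_image.mp hmin
      have hadjwu' : G.Adj w u' := (mem_NB G).mp hu'mem
      have hu's : side u' = true := by
        have := hbip w u' hadjwu'
        rw [hw] at this
        simpa using this.symm
      have hwsub : NB G u' ⊆ NB G r := by
        refine hmono r u' hrs hu's ?_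
        rw [hrd, hu'deg]
        exact h1
      have : w ∈ NB G r := hwsub ((mem_NB G).mpr hadjwu'.symm)
      simp [(mem_NB G).mp this]
    · rw [if_neg h1]
      by_cases h2 : degr G u < dwf G w
      · rw [if_pos h2]
        have : ¬ G.Adj r w := by
          intro hadj
          have hrmem : r ∈ NB G w := (mem_NB G).mpr hadj.symm
          have hNBw : (NB G w).Nonempty := ⟨r, hrmem⟩
          have : dwf G w ≤ degr G r := by
            rw [dwf, dif_pos hNBw]
            exact Finset.min'_le _ _ (Finset.mem_image_of_mem _ hrmem)
          omega
        simp [this]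
      · rw [if_neg h2]
        push_neg at h1 h2
        set j := degr G u - dwf G w with hj
        have hjlt : j < t + 1 := by omega
        have hjl : j < (wList G side t v0 w).length := by rw [hwlen]; exact hjlt
        rw [entry_codeOf _ j hjl]
        have hget : (wList G side t v0 w).get ⟨j, hjl⟩ =
            if G.Adj (rep G side v0 (dwf G w + j)) w then 1 else 0 := by
          simp [wList]
        have hdj : dwf G w + j = degr G u := by omega
        rw [hget, hdj, ← hr]
        split
        · rename_i hh; simp [hh]
        · rename_i hh; simp [hh]
  -- the main per-pair equivalence
  have hmain : ∀ u w : Fin n, side u = true → side w = false →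
      (G.Adj u w ↔ Psi t (lab G side t v0 u) (lab G side t v0 w)) := by
    intro u w hu hw
    obtain ⟨htu, hiu, h1u, h2u⟩ := hdecU u hu
    obtain ⟨htw, hiw, h1w, h2w⟩ := hdecW w hw
    rw [Psi, htu, htw, h1u, h1w, h2u, h2w, hiw]
    rw [hbase u w hu hw, hmem u w hu]
    obtain ⟨hrs, hrd⟩ := rep_spec G side v0 (degr G u) (hSd u hu)
    have hA : w ∈ Aset G side v0 u ↔
        ((G.Adj u w ∧ ¬ G.Adj (rep G side v0 (degr G u)) w) ∨
         (G.Adj (rep G side v0 (degr G u)) w ∧ ¬ G.Adj u w)) := by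
      simp [Aset, Finset.mem_symmDiff, mem_NB]
    rw [hA]
    have logic : ∀ A B : Prop, A ↔ ¬(B ↔ ((A ∧ ¬B) ∨ (B ∧ ¬A))) := by
      intro A B
      by_cases hA : A <;> by_cases hB : B <;> simp [hA, hB]
    constructor
    · intro h
      exact ⟨rfl, rfl, (logic _ _).mp h⟩
    · rintro ⟨-, -, h⟩
      exact (logic _ _).mpr h
  -- assemble
  refine ⟨fun v => ⟨lab G side t v0 v, hsize v⟩, ?_, ?_⟩
  · intro x y hxy
    have : lab G side t v0 x = lab G side t v0 y := congrArg Fin.val hxy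
    have hid : idOf (lab G side t v0 x) = idOf (lab G side t v0 y) := by rw [this]
    have hx : idOf (lab G side t v0 x) = x.val := by
      cases hsx : side x
      · exact (hdecW x hsx).2.1
      · exact (hdecU x hsx).2.1
    have hy : idOf (lab G side t v0 y) = y.val := by
      cases hsy : side y
      · exact (hdecW y hsy).2.1
      · exact (hdecU y hsy).2.1
    exact Fin.ext (by rw [← hx, ← hy, hid])
  · intro u v huv
    simp only
    cases hsu : side u <;> cases hsv : side v
    · constructor
      · intro hadj; exact absurd (hsu.trans hsv.symm) (hbip u v hadj)
      · rintro (⟨h0, -⟩ | ⟨h0, -⟩)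
        · rw [(hdecW u hsu).1] at h0; omega
        · rw [(hdecW v hsv).1] at h0; omega
    · rw [G.adj_comm, hmain v u hsv hsu]
      constructor
      · intro h; exact Or.inr h
      · rintro (⟨h0, -⟩ | h)
        · rw [(hdecW u hsu).1] at h0; omega
        · exact h
    · rw [hmain u v hsu hsv]
      constructor
      · intro h; exact Or.inl h
      · rintro (h | ⟨-, h0, -⟩)
        · exact h
        · rw [(hdecU u hsu).1] at h0; omega
    · constructor
      · intro hadj; exact absurd (hsu.trans hsv.symm) (hbip u v hadj)
      · rintro (⟨-, h0, -⟩ | ⟨-, h0, -⟩)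
        · rw [(hdecU v hsv).1] at h0; omega
        · rw [(hdecU u hsu).1] at h0; omega
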